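/- Let e ∈ [0,1] and let η be a real-valued random variable with mean 0 and variance β². For velocities v, w ∈ ℝ³ and σ ∈ S², define the post-collisional velocities v' = (v+w)/2 + ((1-ẽ)/4)(v-w) + ((1+ẽ)/4)|v-w|σ and w' = (v+w)/2 - ((1-ẽ)/4)(v-w) - ((1+ẽ)/4)|v-w|σ with ẽ = e + η. Then the expected post-collisional energy satisfies E[|v'|² + |w'|²] = |v|² + |w|² - ((1-e²-β²)/4)(|v-w|² - |v-w|(v-w)·σ). -/

import Mathlib

open MeasureTheory

/-- expected post-collisional energy for the random inelastic
Maxwell collision mechanism. -/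
theorem expected_postcollisional_energy
    {Ω : Type*} [MeasurableSpace Ω] (μ : Measure Ω) [IsProbabilityMeasure μ]
    (e β : ℝ) (he0 : 0 ≤ e) (he1 : e ≤ 1)
    (η : Ω → ℝ) (hmeas : Measurable η)
    (hint : Integrable η μ) (hint2 : Integrable (fun ω => (η ω) ^ 2) μ)
    (hmean : ∫ ω, η ω ∂μ = 0) (hvar : ∫ ω, (η ω) ^ 2 ∂μ = β ^ 2)
    (v w σ : EuclideanSpace ℝ (Fin 3)) (hσ : ‖σ‖ = 1)
    (v' w' : Ω → EuclideanSpace ℝ (Fin 3))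
    (hv' : ∀ ω, v' ω = (1 / 2 : ℝ) • (v + w) + ((1 - (e + η ω)) / 4) • (v - w)
        + (((1 + (e + η ω)) / 4) * ‖v - w‖) • σ)
    (hw' : ∀ ω, w' ω = (1 / 2 : ℝ) • (v + w) - ((1 - (e + η ω)) / 4) • (v - w)
        - (((1 + (e + η ω)) / 4) * ‖v - w‖) • σ) :
    ∫ ω, (‖v' ω‖ ^ 2 + ‖w' ω‖ ^ 2) ∂μ
      = ‖v‖ ^ 2 + ‖w‖ ^ 2
        - ((1 - e ^ 2 - β ^ 2) / 4)
            * (‖v - w‖ ^ 2 - ‖v - w‖ * (inner ℝ (v - w) σ : ℝ)) := by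
  set L : ℝ := ‖v - w‖ with hL
  set S : ℝ := (inner ℝ (v - w) σ : ℝ) with hS
  set A : ℝ := ‖v + w‖^2/2 + (1+e^2)/4*L^2 + (1-e^2)/4*L*S with hA
  set B : ℝ := e/2*L^2 - e/2*L*S with hB
  set C : ℝ := L^2/4 - L*S/4 with hC
  have key : ∀ ω, ‖v' ω‖ ^ 2 + ‖w' ω‖ ^ 2 = A + B * η ω + C * (η ω)^2 := by
    intro ω
    rw [hv' ω, hw' ω, add_assoc, sub_sub]
    set c : ℝ := (1 - (e + η ω))/4 with hc
    set d : ℝ := ((1 + (e + η ω))/4) * L with hd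
    set a := ((1:ℝ)/2) • (v + w) with ha
    rw [norm_add_sq_real, norm_sub_sq_real]
    have ha2 : ‖a‖^2 = ‖v + w‖^2/4 := by
      rw [ha, norm_smul]
      simp
      ring
    have hz : ‖c • (v - w) + d • σ‖ ^ 2 = c^2 * L^2 + 2*(c*d)*S + d^2 := by
      rw [norm_add_sq_real, norm_smul, norm_smul, real_inner_smul_left,
        real_inner_smul_right, hσ]
      simp only [Real.norm_eq_abs, mul_pow, sq_abs, one_pow, ← hL, ← hS]
      ring
    rw [ha2, hz, hA, hB, hC, hc, hd]
    ring
  have h1 : ∫ ω, (‖v' ω‖ ^ 2 + ‖w' ω‖ ^ 2) ∂μ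
      = ∫ ω, (A + B * η ω + C * (η ω)^2) ∂μ := by
    exact integral_congr_ae (Filter.Eventually.of_forall key)
  have i1 : ∫ ω, (A + B * η ω + C * (η ω)^2) ∂μ
      = (∫ ω, (A + B * η ω) ∂μ) + ∫ ω, C * (η ω)^2 ∂μ :=
    integral_add ((integrable_const A).add (hint.const_mul B)) (hint2.const_mul C)
  have i2 : ∫ ω, (A + B * η ω) ∂μ = (∫ _ω, A ∂μ) + ∫ ω, B * η ω ∂μ :=
    integral_add (integrable_const A) (hint.const_mul B)
  rw [h1, i1, i2, integral_const, integral_const_mul, integral_const_mul, hmean, hvar]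
  simp only [probReal_univ, measure_univ, ENNReal.toReal_one, smul_eq_mul, one_mul, mul_zero, add_zero]
  have hvw : ‖v + w‖^2 = ‖v‖^2 + 2 * (inner ℝ v w : ℝ) + ‖w‖^2 := norm_add_sq_real v w
  have hvw2 : L^2 = ‖v‖^2 - 2 * (inner ℝ v w : ℝ) + ‖w‖^2 := norm_sub_sq_real v w
  rw [hA, hC, hvw]
  nlinarith [hvw2]
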